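/- Let τ be a multi-partition type of size n/A (a function from partitions to ℕ with Σ_λ τ(λ)|λ| = n/A), and let A·τ be the type obtained by multiplying every multiplicity by A. Then for all positive divisors s: (i) d_{A·τ} = (d_τ)^A where d_τ = Π_λ (|λ|!/Π_{cells} hook)^{τ(λ)}; (ii) #(A·τ) = A·#τ where #τ = Σ_λ τ(λ); and (iii) the combinatorial counts satisfy ϑ(τ,n)·ν(τ,j) = A^{#τ/j}·ϑ(A·τ,n)·ν(A·τ,A·j) for every j, where ν(τ,j) is the number of elements of the Young-type stabilizer group W_τ all of whose orbits have size exactly j, and ϑ(τ,n) counts the admissible labelled set systems 𝓘 of type τ. -/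

import Mathlib

open scoped Classical

noncomputable section

/-- A partition, encoded as a nonempty decreasing list of positive parts. -/
def IsPartitionList (l : List ℕ) : Prop :=
  l ≠ [] ∧ l.Pairwise (· ≥ ·) ∧ ∀ x ∈ l, 0 < x

/-- Column length of a Young diagram at column `j` (0-based). -/
def colLen (l : List ℕ) (j : ℕ) : ℕ := (l.filter fun x => j < x).length

/-- Hook length of the cell `(i,j)` (0-based) of the Young diagram of `l`. -/
def hookLen (l : List ℕ) (i j : ℕ) : ℕ := l.getD i 0 + colLen l j - i - j - 1

/-- The product of all hook lengths of the Young diagram of `l`. -/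
def hookProd (l : List ℕ) : ℕ :=
  ∏ i ∈ Finset.range l.length, ∏ j ∈ Finset.range (l.getD i 0), hookLen l i j

/-- Dimension `χ^λ(1) = |λ|!/Π hooks` of the irreducible `S_{|λ|}`-representation. -/
def partDim (l : List ℕ) : ℕ := (Nat.factorial l.sum) / hookProd l

/-- `d_τ = Π_λ (χ^λ(1))^{m_λ}` for a multi-partition type `τ`. -/
def dConst (τ : List ℕ →₀ ℕ) : ℕ := τ.prod fun l m => (partDim l) ^ m

/-- Total multiplicity `#τ = Σ_λ m_λ`. -/
def typeCount (τ : List ℕ →₀ ℕ) : ℕ := τ.sum fun _ m => m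

/-- Total size `Σ_λ m_λ |λ|` of a type. -/
def typeSize (τ : List ℕ →₀ ℕ) : ℕ := τ.sum fun l m => m * l.sum

/-- `ν(τ,j)`: the number of elements of `W_τ = Π_λ S_{m_λ}` (fiber-preserving permutations
of the canonical index set of `τ`) all of whose orbits have size exactly `j`. -/
def nuCount (τ : List ℕ →₀ ℕ) (j : ℕ) : ℕ :=
  Nat.card {σ : Equiv.Perm ((l : {l // l ∈ τ.support}) × Fin (τ l.1)) //
    (∀ x, (σ x).1 = x.1) ∧ ∀ x, Function.minimalPeriod (⇑σ) x = j}

/-- `ϑ(A, n, τ)`: the number of admissible collections `𝓘` of tuples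
`(λ^{(ι)}, I₁^{(ι)},…,I_A^{(ι)})` of disjoint subsets of `{1,…,n}` of sizes `|λ^{(ι)}|`
partitioning `{1,…,n}`, of induced type `τ`. -/
def thetaCount (A n : ℕ) (τ : List ℕ →₀ ℕ) : ℕ :=
  Nat.card {𝓘 : Finset (List ℕ × (Fin A → Finset (Fin n))) //
    (∀ p ∈ 𝓘, IsPartitionList p.1 ∧ ∀ a : Fin A, (p.2 a).card = p.1.sum) ∧
    (∀ p ∈ 𝓘, ∀ q ∈ 𝓘, ∀ a b : Fin A,
      (p ≠ q ∨ a ≠ b) → Disjoint (p.2 a) (q.2 b)) ∧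
    (∀ i : Fin n, ∃ p ∈ 𝓘, ∃ a : Fin A, i ∈ p.2 a) ∧
    (∀ l : List ℕ, τ l = (𝓘.filter fun p => p.1 = l).card)}

/-- Transfer `minimalPeriod` along an equivalence of period sets. -/
theorem minPeriod_eq_of_iff {α β : Type*} {f : α → α} {g : β → β} {x : α} {y : β}
    (h : ∀ t, Function.IsPeriodicPt f t x ↔ Function.IsPeriodicPt g t y) :
    Function.minimalPeriod f x = Function.minimalPeriod g y := by
  by_cases hx : x ∈ Function.periodicPts f
  · obtain ⟨t, ht, hpt⟩ := id hx
    have hy : y ∈ Function.periodicPts g := ⟨t, ht, (h t).mp hpt⟩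
    have h1 : Function.IsPeriodicPt g (Function.minimalPeriod f x) y :=
      (h _).mp (Function.isPeriodicPt_minimalPeriod f x)
    have h2 : Function.IsPeriodicPt f (Function.minimalPeriod g y) x :=
      (h _).mpr (Function.isPeriodicPt_minimalPeriod g y)
    exact le_antisymm
      (h2.minimalPeriod_le (Function.minimalPeriod_pos_of_mem_periodicPts hy))
      (h1.minimalPeriod_le (Function.minimalPeriod_pos_of_mem_periodicPts hx))
  · have hy : y ∉ Function.periodicPts g := by
      rintro ⟨t, ht, hpt⟩
      exact hx ⟨t, ht, (h t).mpr hpt⟩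
    rw [Function.minimalPeriod_eq_zero_of_notMem_periodicPts hx,
      Function.minimalPeriod_eq_zero_of_notMem_periodicPts hy]

theorem minPeriod_conj {α β : Type*} (e : α ≃ β) (f : α → α) (x : α) :
    Function.minimalPeriod (⇑e ∘ f ∘ ⇑e.symm) (e x) = Function.minimalPeriod f x := by
  have hsc : Function.Semiconj ⇑e f (⇑e ∘ f ∘ ⇑e.symm) := fun a => by simp
  refine (minPeriod_eq_of_iff fun t => ?_).symm
  have := (hsc.iterate_right t).eq x
  constructor
  · intro hp
    simpa [Function.IsPeriodicPt, Function.IsFixedPt, this] using congrArg e hp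
  · intro hp
    have : e (f^[t] x) = e x := by
      simpa [Function.IsPeriodicPt, Function.IsFixedPt, this] using hp
    exact e.injective this

/-- The count of permutations of `Fin m` all of whose orbits have size exactly `j`. -/
def allJCard (m j : ℕ) : ℕ :=
  Nat.card {σ : Equiv.Perm (Fin m) // ∀ x, Function.minimalPeriod (⇑σ) x = j}

/-- Generic fiber-counting: if all fibers of `Φ` are equivalent to `F`, cardinalities multiply. -/
theorem nat_card_eq_mul_of_fibers {X Y F : Type*} (Φ : X → Y)
    (h : ∀ y : Y, Nonempty ({x // Φ x = y} ≃ F)) :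
    Nat.card X = Nat.card Y * Nat.card F := by
  calc Nat.card X = Nat.card (Σ y : Y, {x // Φ x = y}) :=
        (Nat.card_congr (Equiv.sigmaFiberEquiv Φ)).symm
    _ = Nat.card (Y × F) :=
        Nat.card_congr ((Equiv.sigmaCongrRight fun y => (h y).some).trans
          (Equiv.sigmaEquivProd Y F))
    _ = Nat.card Y * Nat.card F := by rw [Nat.card_prod]

theorem sum_pos_of_isPartitionList {l : List ℕ} (h : IsPartitionList l) : 0 < l.sum := by
  obtain ⟨hne, -, hpos⟩ := h
  cases l with
  | nil => exact absurd rfl hne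
  | cons x xs =>
      simp only [List.sum_cons]
      exact lt_of_lt_of_le (hpos x List.mem_cons_self) (Nat.le_add_right x xs.sum)

section OrbitCounting

open Function Equiv Finset

variable {m j : ℕ}

/-- The orbit of `x` under a permutation all of whose orbits have size `j`. -/
def orbF (σ : Equiv.Perm (Fin m)) (j : ℕ) (x : Fin m) : Finset (Fin m) :=
  Finset.image (fun t : Fin j => (⇑σ)^[t.val] x) Finset.univ

variable {σ : Equiv.Perm (Fin m)} (hσ : ∀ x, Function.minimalPeriod (⇑σ) x = j)
include hσ

theorem orbF_periodic (x : Fin m) : IsPeriodicPt (⇑σ) j x := by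
  rw [← hσ x]; exact isPeriodicPt_minimalPeriod _ _

theorem iter_mem_orbF (hj : 0 < j) (x : Fin m) (u : ℕ) : (⇑σ)^[u] x ∈ orbF σ j x := by
  refine Finset.mem_image.mpr ⟨⟨u % j, Nat.mod_lt _ hj⟩, Finset.mem_univ _, ?_⟩
  exact (orbF_periodic hσ x).iterate_mod_apply u

theorem mem_orbF_self (hj : 0 < j) (x : Fin m) : x ∈ orbF σ j x := by
  simpa using iter_mem_orbF hσ hj x 0

theorem orbF_eq_of_mem (hj : 0 < j) {x y : Fin m} (hy : y ∈ orbF σ j x) :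
    orbF σ j y = orbF σ j x := by
  obtain ⟨t, -, rfl⟩ := Finset.mem_image.mp hy
  have hxy : x = (⇑σ)^[j - t.val] ((⇑σ)^[t.val] x) := by
    rw [← Function.iterate_add_apply, Nat.sub_add_cancel t.isLt.le]
    exact (orbF_periodic hσ x).symm
  apply Finset.Subset.antisymm
  · intro z hz
    obtain ⟨s, -, rfl⟩ := Finset.mem_image.mp hz
    rw [← Function.iterate_add_apply]
    exact iter_mem_orbF hσ hj x _
  · intro z hz
    obtain ⟨s, -, rfl⟩ := Finset.mem_image.mp hz
    have h2 : (⇑σ)^[s.val] x = (⇑σ)^[s.val + (j - t.val)] ((⇑σ)^[t.val] x) := by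
      rw [Function.iterate_add_apply, ← hxy]
    rw [h2]
    exact iter_mem_orbF hσ hj _ _

theorem iter_inj_orbF (x : Fin m) {s t : ℕ} (hst : s ≤ t) (ht : t < j)
    (h : (⇑σ)^[t] x = (⇑σ)^[s] x) : t = s := by
  have h1 : (⇑σ)^[s] ((⇑σ)^[t - s] x) = (⇑σ)^[s] x := by
    rw [← Function.iterate_add_apply, Nat.add_sub_cancel' hst]; exact h
  have h2 : (⇑σ)^[t - s] x = x := (σ.injective.iterate s) h1
  have h3 : j ∣ t - s := by
    rw [← hσ x]; exact (IsPeriodicPt.minimalPeriod_dvd h2)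
  have h4 : t - s = 0 := Nat.eq_zero_of_dvd_of_lt h3 (lt_of_le_of_lt (Nat.sub_le t s) ht)
  omega

theorem card_orbF (hj : 0 < j) (x : Fin m) : (orbF σ j x).card = j := by
  rw [orbF, Finset.card_image_of_injective _ ?_, Finset.card_univ, Fintype.card_fin]
  intro s t h
  rcases le_total s.val t.val with hle | hle
  · exact Fin.ext (iter_inj_orbF hσ x hle t.isLt h.symm).symm
  · exact Fin.ext (iter_inj_orbF hσ x hle s.isLt h)

theorem orbF_count (hj : 0 < j) :
    (Finset.univ.image (orbF σ j)).card * j = m := by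
  have key := Finset.card_eq_sum_card_fiberwise
    (f := orbF σ j) (s := Finset.univ) (t := Finset.univ.image (orbF σ j))
    (fun x _ => Finset.mem_image_of_mem _ (Finset.mem_univ x))
  rw [Finset.card_univ, Fintype.card_fin] at key
  have h5 : ∀ o ∈ Finset.univ.image (orbF σ j),
      (Finset.univ.filter fun x => orbF σ j x = o).card = j := by
    intro o ho
    obtain ⟨z, -, rfl⟩ := Finset.mem_image.mp ho
    have heq : Finset.univ.filter (fun x => orbF σ j x = orbF σ j z) = orbF σ j z := by
      ext x
      simp only [Finset.mem_filter, Finset.mem_univ, true_and]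
      exact ⟨fun h => h ▸ mem_orbF_self hσ hj x, fun h => orbF_eq_of_mem hσ hj h⟩
    rw [heq, card_orbF hσ hj]
  have h6 : ∑ b ∈ Finset.univ.image (orbF σ j),
      (Finset.univ.filter fun x => orbF σ j x = b).card
      = (Finset.univ.image (orbF σ j)).card * j := by
    rw [Finset.sum_congr rfl h5, Finset.sum_const, smul_eq_mul]
  omega

theorem dvd_of_allJ (hj : 0 < j) : j ∣ m :=
  Dvd.intro_left _ (orbF_count hσ hj)

end OrbitCounting

theorem allJCard_eq_zero {m j : ℕ} (hj : 0 < j) (h : ¬ j ∣ m) : allJCard m j = 0 := by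
  rw [allJCard, Nat.card_eq_zero]
  left
  refine ⟨fun ⟨σ, hσ⟩ => h (dvd_of_allJ hσ hj)⟩

section ShiftPerm

open Function Equiv

variable (k j : ℕ) [NeZero j]

def shiftP : Equiv.Perm (Fin k × ZMod j) :=
  Equiv.prodCongr (Equiv.refl _) (Equiv.addRight (1 : ZMod j))

theorem shiftP_apply (p : Fin k × ZMod j) : shiftP k j p = (p.1, p.2 + 1) := rfl

theorem shiftP_iter (t : ℕ) (p : Fin k × ZMod j) :
    (⇑(shiftP k j))^[t] p = (p.1, p.2 + (t : ZMod j)) := by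
  induction t with
  | zero => simp
  | succ n ih =>
      rw [Function.iterate_succ_apply', ih, shiftP_apply]
      refine Prod.ext rfl ?_
      push_cast
      ring

theorem isPeriodicPt_shiftP_iff (t : ℕ) (p : Fin k × ZMod j) :
    Function.IsPeriodicPt (⇑(shiftP k j)) t p ↔ j ∣ t := by
  rw [Function.IsPeriodicPt, Function.IsFixedPt, shiftP_iter]
  constructor
  · intro h
    have h2 : p.2 + (t : ZMod j) = p.2 := congrArg Prod.snd h
    have h3 : (t : ZMod j) = 0 := by
      have := add_eq_left.mp h2
      exact this
    exact (ZMod.natCast_eq_zero_iff t j).mp h3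
  · intro h
    have h3 : (t : ZMod j) = 0 := (ZMod.natCast_eq_zero_iff t j).mpr h
    rw [h3, add_zero]

theorem minPeriod_shiftP (hj : 0 < j) (p : Fin k × ZMod j) :
    Function.minimalPeriod (⇑(shiftP k j)) p = j := by
  apply Nat.dvd_antisymm
  · exact Function.IsPeriodicPt.minimalPeriod_dvd
      ((isPeriodicPt_shiftP_iff k j j p).mpr dvd_rfl)
  · exact (isPeriodicPt_shiftP_iff k j _ p).mp (Function.isPeriodicPt_minimalPeriod _ _)

def conjPerm (m : ℕ) (e : Fin k × ZMod j ≃ Fin m) : Equiv.Perm (Fin m) :=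
  e.symm.trans ((shiftP k j).trans e)

theorem conjPerm_apply (m : ℕ) (e : Fin k × ZMod j ≃ Fin m) (p : Fin k × ZMod j) :
    conjPerm k j m e (e p) = e (shiftP k j p) := by
  simp [conjPerm]

theorem minPeriod_conjPerm (m : ℕ) (hj : 0 < j) (e : Fin k × ZMod j ≃ Fin m) (x : Fin m) :
    Function.minimalPeriod (⇑(conjPerm k j m e)) x = j := by
  have h1 : ⇑(conjPerm k j m e) = ⇑e ∘ ⇑(shiftP k j) ∘ ⇑e.symm := by
    funext y; simp [conjPerm]
  have h2 := minPeriod_conj e ⇑(shiftP k j) (e.symm x)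
  rw [Equiv.apply_symm_apply] at h2
  rw [h1, h2, minPeriod_shiftP k j hj]

end ShiftPerm

theorem allJCard_mul (m j : ℕ) (hj : 0 < j) (hdvd : j ∣ m) :
    allJCard m j * (Nat.factorial (m / j) * j ^ (m / j)) = Nat.factorial m := by
  haveI : NeZero j := ⟨hj.ne'⟩
  set k := m / j with hk
  have hm : k * j = m := Nat.div_mul_cancel hdvd
  have hcardD : Fintype.card (Fin k × ZMod j) = m := by
    simp [ZMod.card, hm]
  have main : Nat.card (Fin k × ZMod j ≃ Fin m) =
      Nat.card {σ : Equiv.Perm (Fin m) // ∀ x, Function.minimalPeriod (⇑σ) x = j} *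
      Nat.card (Equiv.Perm (Fin k) × (Fin k → ZMod j)) := by
    refine nat_card_eq_mul_of_fibers
      (fun e => ⟨conjPerm k j m e, minPeriod_conjPerm k j m hj e⟩) ?_
    rintro ⟨σ, hσ⟩
    -- Step 1: the fiber is nonempty
    have hOc := orbF_count hσ hj
    have hkc : (Finset.univ.image (orbF σ j)).card = k :=
      Nat.eq_of_mul_eq_mul_right hj (by rw [hOc, hm])
    obtain ⟨g⟩ : Nonempty (Fin k ≃ {o // o ∈ Finset.univ.image (orbF σ j)}) :=
      ⟨Fintype.equivOfCardEq (by rw [Fintype.card_fin, Fintype.card_coe, hkc])⟩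
    have hone : ∀ o : {o // o ∈ Finset.univ.image (orbF σ j)}, o.1.Nonempty := by
      intro o
      obtain ⟨z, -, hz⟩ := Finset.mem_image.mp o.2
      refine Finset.card_pos.mp ?_
      rw [← hz, card_orbF hσ hj]
      exact hj
    set rep : {o // o ∈ Finset.univ.image (orbF σ j)} → Fin m :=
      fun o => o.1.min' (hone o) with hrepdef
    have hrep : ∀ o, rep o ∈ o.1 := fun o => Finset.min'_mem _ _
    have hOrep : ∀ o, orbF σ j (rep o) = o.1 := by
      intro o
      obtain ⟨z, -, hz⟩ := Finset.mem_image.mp o.2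
      exact (orbF_eq_of_mem hσ hj (hz ▸ hrep o)).trans hz
    set E : Fin k × ZMod j → Fin m := fun p => (⇑σ)^[(p.2).val] (rep (g p.1)) with hEdef
    have hEorb : ∀ p, orbF σ j (E p) = (g p.1).1 := by
      intro p
      rw [← hOrep (g p.1)]
      exact orbF_eq_of_mem hσ hj (iter_mem_orbF hσ hj _ _)
    have hEinj : Function.Injective E := by
      rintro ⟨i, a⟩ ⟨i', a'⟩ h
      have h1 : (g i).1 = (g i').1 := by
        rw [← hEorb ⟨i, a⟩, ← hEorb ⟨i', a'⟩, h]
      have hi : i = i' := g.injective (Subtype.ext h1)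
      subst hi
      have h2 : (⇑σ)^[a.val] (rep (g i)) = (⇑σ)^[a'.val] (rep (g i)) := h
      have hval : a.val = a'.val := by
        rcases le_total a.val a'.val with hle | hle
        · exact (iter_inj_orbF hσ _ hle (ZMod.val_lt a') h2.symm).symm
        · exact iter_inj_orbF hσ _ hle (ZMod.val_lt a) h2
      have ha : a = a' := by
        have h3 : ((a.val : ℕ) : ZMod j) = ((a'.val : ℕ) : ZMod j) := by rw [hval]
        rwa [ZMod.natCast_rightInverse a, ZMod.natCast_rightInverse a'] at h3
      rw [ha]
    have hEsurj : Function.Surjective E := by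
      intro x
      have hx : orbF σ j x ∈ Finset.univ.image (orbF σ j) :=
        Finset.mem_image_of_mem _ (Finset.mem_univ x)
      have hxo : x ∈ orbF σ j (rep (g (g.symm ⟨orbF σ j x, hx⟩))) := by
        rw [g.apply_symm_apply, hOrep ⟨orbF σ j x, hx⟩]
        exact mem_orbF_self hσ hj x
      obtain ⟨t, -, ht⟩ := Finset.mem_image.mp hxo
      refine ⟨(g.symm ⟨orbF σ j x, hx⟩, (t.val : ZMod j)), ?_⟩
      show (⇑σ)^[((t.val : ℕ) : ZMod j).val] (rep (g (g.symm ⟨orbF σ j x, hx⟩))) = x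
      rw [ZMod.val_natCast_of_lt t.isLt]
      exact ht
    set e₀ := Equiv.ofBijective E ⟨hEinj, hEsurj⟩ with he₀def
    have hΦe₀ : conjPerm k j m e₀ = σ := by
      apply Equiv.ext; intro x
      obtain ⟨⟨i, a⟩, rfl⟩ := hEsurj x
      have h1 : conjPerm k j m e₀ (e₀ ⟨i, a⟩) = e₀ (shiftP k j ⟨i, a⟩) :=
        conjPerm_apply k j m e₀ ⟨i, a⟩
      have h2 : e₀ (shiftP k j ⟨i, a⟩) = (⇑σ)^[(a + 1 : ZMod j).val] (rep (g i)) := rfl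
      have h3 : σ (E ⟨i, a⟩) = (⇑σ)^[a.val + 1] (rep (g i)) :=
        (Function.iterate_succ_apply' (⇑σ) a.val _).symm
      have h4 : (a + 1 : ZMod j).val = (a.val + 1) % j := by
        have h4a : ((a.val + 1 : ℕ) : ZMod j) = a + 1 := by
          push_cast
          rw [ZMod.natCast_rightInverse a]
        rw [← h4a, ZMod.val_natCast]
      have h5 : (⇑σ)^[(a.val + 1) % j] (rep (g i)) = (⇑σ)^[a.val + 1] (rep (g i)) :=
        (orbF_periodic hσ _).iterate_mod_apply _
      show conjPerm k j m e₀ (E ⟨i, a⟩) = σ (E ⟨i, a⟩)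
      calc conjPerm k j m e₀ (E ⟨i, a⟩) = e₀ (shiftP k j ⟨i, a⟩) := h1
        _ = (⇑σ)^[(a.val + 1) % j] (rep (g i)) := by rw [h2, h4]
        _ = (⇑σ)^[a.val + 1] (rep (g i)) := h5
        _ = σ (E ⟨i, a⟩) := h3.symm
    -- Step 2: the fiber is a torsor
    set ψfun : (Equiv.Perm (Fin k) × (Fin k → ZMod j)) → Equiv.Perm (Fin k × ZMod j) :=
      fun pc =>
        { toFun := fun p => (pc.1 p.1, p.2 + pc.2 p.1)
          invFun := fun p => (pc.1.symm p.1, p.2 - pc.2 (pc.1.symm p.1))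
          left_inv := by rintro ⟨i, a⟩; simp
          right_inv := by rintro ⟨i, a⟩; simp } with hψdef
    have hψs : ∀ pc p, ψfun pc (shiftP k j p) = shiftP k j (ψfun pc p) := by
      rintro pc ⟨i, a⟩
      refine Prod.ext rfl ?_
      show a + 1 + pc.2 i = a + pc.2 i + 1
      ring
    have hΦψ : ∀ pc, conjPerm k j m ((ψfun pc).trans e₀) = σ := by
      intro pc
      apply Equiv.ext; intro x
      have h1 : conjPerm k j m ((ψfun pc).trans e₀) x
          = e₀ ((ψfun pc) (shiftP k j ((ψfun pc).symm (e₀.symm x)))) := rfl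
      rw [h1, hψs pc _, Equiv.apply_symm_apply]
      show conjPerm k j m e₀ x = σ x
      rw [hΦe₀]
    refine ⟨(Equiv.ofBijective
      (fun pc => (⟨(ψfun pc).trans e₀, Subtype.ext (hΦψ pc)⟩ :
        {e // (⟨conjPerm k j m e, minPeriod_conjPerm k j m hj e⟩ :
          {σ : Equiv.Perm (Fin m) // ∀ x, Function.minimalPeriod (⇑σ) x = j}) = ⟨σ, hσ⟩}))
      ⟨?_, ?_⟩).symm⟩
    · -- injective
      intro pc pc' h
      have hval := congrArg Subtype.val h
      have hψeq : ∀ p, ψfun pc p = ψfun pc' p := by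
        intro p
        have := congrArg (fun (e : Fin k × ZMod j ≃ Fin m) => e p) hval
        exact e₀.injective this
      have h1 : ∀ i : Fin k, (pc.1 i, (0 : ZMod j) + pc.2 i) = (pc'.1 i, (0 : ZMod j) + pc'.2 i) :=
        fun i => hψeq (i, 0)
      refine Prod.ext (Equiv.ext fun i => congrArg Prod.fst (h1 i)) (funext fun i => ?_)
      have := congrArg Prod.snd (h1 i)
      simpa using this
    · -- surjective
      rintro ⟨e, he⟩
      have hσe : conjPerm k j m e = σ := congrArg Subtype.val he
      have hcomm : ∀ p, e₀.symm (e (shiftP k j p)) = shiftP k j (e₀.symm (e p)) := by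
        intro p
        have h1 : e (shiftP k j p) = σ (e p) := by
          rw [← hσe]; exact (conjPerm_apply k j m e p).symm
        have h2 : ∀ z, e₀.symm (σ z) = shiftP k j (e₀.symm z) := by
          intro z
          apply e₀.injective
          rw [Equiv.apply_symm_apply, ← hΦe₀]
          have := conjPerm_apply k j m e₀ (e₀.symm z)
          rw [Equiv.apply_symm_apply] at this
          exact this.symm
        rw [h1, h2]
      have hsemi : Function.Semiconj (fun p => e₀.symm (e p)) ⇑(shiftP k j) ⇑(shiftP k j) :=
        fun p => hcomm p
      have hiter : ∀ (t : ℕ) p, e₀.symm (e ((⇑(shiftP k j))^[t] p))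
          = (⇑(shiftP k j))^[t] (e₀.symm (e p)) := fun t p => (hsemi.iterate_right t) p
      set π₀ : Fin k → Fin k := fun i => (e₀.symm (e (i, 0))).1 with hπ₀def
      set c₀ : Fin k → ZMod j := fun i => (e₀.symm (e (i, 0))).2 with hc₀def
      have hψe : ∀ p : Fin k × ZMod j, e₀.symm (e p) = (π₀ p.1, c₀ p.1 + p.2) := by
        rintro ⟨i, a⟩
        have hval : ((a.val : ℕ) : ZMod j) = a := ZMod.natCast_rightInverse a
        have h1 : (i, a) = (⇑(shiftP k j))^[a.val] (i, (0 : ZMod j)) := by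
          rw [shiftP_iter, zero_add, hval]
        show e₀.symm (e (i, a)) = (π₀ i, c₀ i + a)
        conv_lhs => rw [h1]
        rw [hiter, shiftP_iter]
        show ((e₀.symm (e (i, 0))).1, (e₀.symm (e (i, 0))).2 + ((a.val : ℕ) : ZMod j))
          = (π₀ i, c₀ i + a)
        rw [hval]
      have hπinj : Function.Injective π₀ := by
        intro i i' hπ
        have h2 : e₀.symm (e (i', c₀ i - c₀ i')) = e₀.symm (e (i, 0)) := by
          rw [hψe, hψe]
          exact Prod.ext hπ.symm (by ring)
        have h3 := e.injective (e₀.symm.injective h2)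
        exact (congrArg Prod.fst h3).symm
      set πE : Equiv.Perm (Fin k) :=
        Equiv.ofBijective π₀ ((Finite.injective_iff_bijective).mp hπinj) with hπEdef
      refine ⟨(πE, c₀), Subtype.ext ?_⟩
      apply Equiv.ext; rintro ⟨i, a⟩
      show e₀ (πE i, a + c₀ i) = e (i, a)
      have h3 : ((πE i : Fin k), a + c₀ i) = e₀.symm (e (i, a)) := by
        rw [hψe]
        refine Prod.ext rfl ?_
        show a + c₀ i = c₀ i + a
        ring
      rw [h3, Equiv.apply_symm_apply]
  -- Put the counts together
  have hX : Nat.card (Fin k × ZMod j ≃ Fin m) = Nat.factorial m := by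
    rw [Nat.card_eq_fintype_card, Fintype.card_equiv (Fintype.equivOfCardEq (by rw [hcardD, Fintype.card_fin])),
      hcardD]
  have hF : Nat.card (Equiv.Perm (Fin k) × (Fin k → ZMod j))
      = Nat.factorial k * j ^ k := by
    rw [Nat.card_prod, Nat.card_eq_fintype_card, Nat.card_eq_fintype_card,
      Fintype.card_perm, Fintype.card_fin, Fintype.card_fun, ZMod.card, Fintype.card_fin]
  rw [hX, hF] at main
  exact main.symm

section SigmaPerm

open Function Equiv

variable {ι : Type*} {β : ι → Type*}

theorem sigmaCongrRight_iterate (F : ∀ i, Equiv.Perm (β i)) (t : ℕ) (i : ι) (x : β i) :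
    (⇑(Equiv.sigmaCongrRight F))^[t] ⟨i, x⟩ = ⟨i, (⇑(F i))^[t] x⟩ := by
  induction t with
  | zero => rfl
  | succ n ih =>
      rw [Function.iterate_succ_apply', Function.iterate_succ_apply', ih]
      rfl

theorem minPeriod_sigmaCongrRight (F : ∀ i, Equiv.Perm (β i)) (i : ι) (x : β i) :
    Function.minimalPeriod (⇑(Equiv.sigmaCongrRight F)) ⟨i, x⟩
      = Function.minimalPeriod (⇑(F i)) x := by
  refine minPeriod_eq_of_iff fun t => ?_
  rw [Function.IsPeriodicPt, Function.IsPeriodicPt, Function.IsFixedPt, Function.IsFixedPt,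
    sigmaCongrRight_iterate]
  constructor
  · intro h
    exact eq_of_heq (Sigma.mk.inj_iff.mp h).2
  · intro h
    rw [h]

theorem nuCard_sigma [∀ i, Finite (β i)] (j : ℕ) :
    Nat.card {σ : Equiv.Perm ((i : ι) × β i) //
        (∀ x, (σ x).1 = x.1) ∧ ∀ x, Function.minimalPeriod (⇑σ) x = j}
      = Nat.card (∀ i, {π : Equiv.Perm (β i) // ∀ x, Function.minimalPeriod (⇑π) x = j}) := by
  refine (Nat.card_eq_of_bijective
    (fun g => ⟨Equiv.sigmaCongrRight (fun i => (g i).1),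
      fun x => by cases x; rfl,
      fun x => by
        rcases x with ⟨i, x⟩
        rw [minPeriod_sigmaCongrRight]
        exact (g i).2 x⟩) ⟨?_, ?_⟩).symm
  · intro g g' h
    have hval := congrArg Subtype.val h
    funext i; apply Subtype.ext; apply Equiv.ext; intro x
    have h2 := congrArg (fun (σ : Equiv.Perm ((i : ι) × β i)) => σ ⟨i, x⟩) hval
    exact eq_of_heq (Sigma.mk.inj_iff.mp h2).2
  · rintro ⟨σ, hfib, hper⟩
    set f : ∀ i, β i → β i := fun i x => cast (congrArg β (hfib ⟨i, x⟩)) (σ ⟨i, x⟩).2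
      with hfdef
    have hkey : ∀ (i : ι) (x : β i), σ ⟨i, x⟩ = ⟨i, f i x⟩ := by
      intro i x
      refine Sigma.ext (hfib ⟨i, x⟩) ?_
      exact (cast_heq _ _).symm
    have hfinj : ∀ i, Function.Injective (f i) := by
      intro i x y hxy
      have h1 : σ ⟨i, x⟩ = σ ⟨i, y⟩ := by rw [hkey, hkey, hxy]
      exact eq_of_heq (Sigma.mk.inj_iff.mp (σ.injective h1)).2
    set F : ∀ i, Equiv.Perm (β i) :=
      fun i => Equiv.ofBijective (f i) ((Finite.injective_iff_bijective).mp (hfinj i))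
      with hFdef
    have hσF : Equiv.sigmaCongrRight F = σ := by
      apply Equiv.ext; rintro ⟨i, x⟩
      exact (hkey i x).symm
    refine ⟨fun i => ⟨F i, fun x => ?_⟩, Subtype.ext hσF⟩
    rw [← minPeriod_sigmaCongrRight F i x, hσF]
    exact hper ⟨i, x⟩

end SigmaPerm

theorem nuCount_eq_prod (τ : List ℕ →₀ ℕ) (j : ℕ) :
    nuCount τ j = ∏ l ∈ τ.support, allJCard (τ l) j := by
  rw [nuCount, nuCard_sigma (β := fun l : {l // l ∈ τ.support} => Fin (τ l.1)) j,
    Nat.card_pi, ← Finset.prod_coe_sort τ.support (fun l => allJCard (τ l) j)]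
  rfl

section Matching

variable {γ : Type*}

/-- `M` is a partition of `S` into (ordered) `A`-tuples. -/
def IsMatching (A : ℕ) (S : Finset γ) (M : Finset (Fin A → γ)) : Prop :=
  (∀ F ∈ M, ∀ a, F a ∈ S) ∧
  (∀ F ∈ M, ∀ G ∈ M, ∀ a b, F a = G b → F = G ∧ a = b) ∧
  (∀ x ∈ S, ∃ F ∈ M, ∃ a, F a = x)

theorem IsMatching.card_eq {A : ℕ} {S : Finset γ} {M : Finset (Fin A → γ)}
    (hM : IsMatching A S M) : S.card = M.card * A := by
  have himg : S = (M ×ˢ (Finset.univ : Finset (Fin A))).image (fun Fa => Fa.1 Fa.2) := by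
    ext x
    simp only [Finset.mem_image, Finset.mem_product, Finset.mem_univ, and_true, Prod.exists]
    constructor
    · intro hx
      obtain ⟨F, hF, a, ha⟩ := hM.2.2 x hx
      exact ⟨F, a, hF, ha⟩
    · rintro ⟨F, a, hF, rfl⟩
      exact hM.1 F hF a
  rw [himg, Finset.card_image_of_injOn, Finset.card_product, Finset.card_univ,
    Fintype.card_fin]
  rintro ⟨F, a⟩ hFa ⟨G, b⟩ hGb h
  simp only [Finset.mem_coe, Finset.mem_product, Finset.mem_univ, and_true] at hFa hGb
  obtain ⟨h1, h2⟩ := hM.2.1 F hFa G hGb a b h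
  rw [h1, h2]

theorem matching_count (A m : ℕ) (hA : 0 < A) (S : Finset γ) (hS : S.card = A * m) :
    Nat.card {M : Finset (Fin A → γ) // IsMatching A S M} * Nat.factorial m
      = Nat.factorial (A * m) := by
  have hcardS : Fintype.card {x // x ∈ S} = A * m := by
    rw [Fintype.card_coe, hS]
  have hcardD : Fintype.card (Fin m × Fin A) = Fintype.card {x // x ∈ S} := by
    rw [hcardS, Fintype.card_prod, Fintype.card_fin, Fintype.card_fin, mul_comm]
  have main : Nat.card (Fin m × Fin A ≃ {x // x ∈ S}) =
      Nat.card {M : Finset (Fin A → γ) // IsMatching A S M} *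
      Nat.card (Equiv.Perm (Fin m)) := by
    refine nat_card_eq_mul_of_fibers (fun e => ⟨Finset.univ.image
      (fun i : Fin m => fun a : Fin A => ((e (i, a) : {x // x ∈ S}) : γ)), ?_, ?_, ?_⟩) ?_
    · -- (1)
      intro F hF a
      obtain ⟨i, -, rfl⟩ := Finset.mem_image.mp hF
      exact (e (i, a)).2
    · -- (2)
      intro F hF G hG a b h
      obtain ⟨i, -, rfl⟩ := Finset.mem_image.mp hF
      obtain ⟨i', -, rfl⟩ := Finset.mem_image.mp hG
      have h1 : e (i, a) = e (i', b) := Subtype.coe_injective h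
      have h2 : (i, a) = (i', b) := e.injective h1
      have h3 : i = i' := congrArg Prod.fst h2
      have h4 : a = b := congrArg Prod.snd h2
      subst h3; subst h4
      exact ⟨rfl, rfl⟩
    · -- (3)
      intro x hx
      refine ⟨fun a => ((e ((e.symm ⟨x, hx⟩).1, a) : {x // x ∈ S}) : γ),
        Finset.mem_image_of_mem _ (Finset.mem_univ _), (e.symm ⟨x, hx⟩).2, ?_⟩
      show ((e ((e.symm ⟨x, hx⟩).1, (e.symm ⟨x, hx⟩).2) : {x // x ∈ S}) : γ) = x
      rw [show ((e.symm ⟨x, hx⟩).1, (e.symm ⟨x, hx⟩).2) = e.symm ⟨x, hx⟩ from rfl,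
        Equiv.apply_symm_apply]
    · -- fibers
      rintro ⟨M, hM⟩
      have hMcard : M.card = m := by
        have := hM.card_eq
        rw [hS] at this
        exact Nat.eq_of_mul_eq_mul_right hA (by rw [← this, mul_comm A m])
      obtain ⟨gM⟩ : Nonempty (Fin m ≃ {F // F ∈ M}) :=
        ⟨Fintype.equivOfCardEq (by rw [Fintype.card_fin, Fintype.card_coe, hMcard])⟩
      set E : Fin m × Fin A → {x // x ∈ S} :=
        fun p => ⟨(gM p.1).1 p.2, hM.1 _ (gM p.1).2 p.2⟩ with hEdef
      have hEinj : Function.Injective E := by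
        rintro ⟨i, a⟩ ⟨i', b⟩ h
        have h1 : (gM i).1 a = (gM i').1 b := congrArg Subtype.val h
        obtain ⟨h2, h3⟩ := hM.2.1 _ (gM i).2 _ (gM i').2 a b h1
        have h4 : i = i' := gM.injective (Subtype.ext h2)
        rw [h4, h3]
      have hEsurj : Function.Surjective E := by
        rintro ⟨x, hx⟩
        obtain ⟨F, hF, a, ha⟩ := hM.2.2 x hx
        refine ⟨(gM.symm ⟨F, hF⟩, a), Subtype.ext ?_⟩
        show (gM (gM.symm ⟨F, hF⟩)).1 a = x
        rw [Equiv.apply_symm_apply]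
        exact ha
      set e₀ := Equiv.ofBijective E ⟨hEinj, hEsurj⟩ with he₀def
      have hIm : ∀ (e : Fin m × Fin A ≃ {x // x ∈ S}),
          Finset.univ.image (fun i : Fin m => fun a : Fin A => ((e (i, a) : {x // x ∈ S}) : γ))
            = M ↔ (∀ i, (fun a => ((e (i, a) : {x // x ∈ S}) : γ)) ∈ M) ∧
              (∀ F ∈ M, ∃ i, (fun a => ((e (i, a) : {x // x ∈ S}) : γ)) = F) := by
        intro e
        constructor
        · intro h
          constructor
          · intro i
            rw [← h]
            exact Finset.mem_image_of_mem _ (Finset.mem_univ _)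
          · intro F hF
            rw [← h] at hF
            obtain ⟨i, -, hi⟩ := Finset.mem_image.mp hF
            exact ⟨i, hi⟩
        · rintro ⟨h1, h2⟩
          ext F
          simp only [Finset.mem_image, Finset.mem_univ, true_and]
          constructor
          · rintro ⟨i, rfl⟩; exact h1 i
          · intro hF; exact h2 F hF
      have hΦe₀ : Finset.univ.image
          (fun i : Fin m => fun a : Fin A => ((e₀ (i, a) : {x // x ∈ S}) : γ)) = M := by
        rw [hIm e₀]
        constructor
        · intro i
          have : (fun a => ((e₀ (i, a) : {x // x ∈ S}) : γ)) = (gM i).1 := rfl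
          rw [this]; exact (gM i).2
        · intro F hF
          refine ⟨gM.symm ⟨F, hF⟩, ?_⟩
          have : (fun a => ((e₀ (gM.symm ⟨F, hF⟩, a) : {x // x ∈ S}) : γ))
              = (gM (gM.symm ⟨F, hF⟩)).1 := rfl
          rw [this, Equiv.apply_symm_apply]
      -- the torsor
      refine ⟨(Equiv.ofBijective (fun π : Equiv.Perm (Fin m) =>
        (⟨(Equiv.prodCongr π (Equiv.refl (Fin A))).trans e₀, Subtype.ext ?_⟩ :
          {e // _ = (⟨M, hM⟩ : {M : Finset (Fin A → γ) // IsMatching A S M})})) ⟨?_, ?_⟩).symm⟩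
      · -- well-defined
        show Finset.univ.image (fun i : Fin m => fun a : Fin A =>
          ((e₀ (π i, a) : {x // x ∈ S}) : γ)) = M
        rw [← hΦe₀]
        ext F
        simp only [Finset.mem_image, Finset.mem_univ, true_and]
        constructor
        · rintro ⟨i, rfl⟩; exact ⟨π i, rfl⟩
        · rintro ⟨i, rfl⟩; exact ⟨π.symm i, by rw [Equiv.apply_symm_apply]⟩
      · -- injective
        intro π π' h
        have hval := congrArg Subtype.val h
        apply Equiv.ext; intro i
        have h2 := congrArg (fun (e : Fin m × Fin A ≃ {x // x ∈ S}) => e (i, ⟨0, hA⟩)) hval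
        have h3 : e₀ (π i, ⟨0, hA⟩) = e₀ (π' i, ⟨0, hA⟩) := h2
        have h4 := e₀.injective h3
        exact congrArg Prod.fst h4
      · -- surjective
        rintro ⟨e, he⟩
        have heM : Finset.univ.image
            (fun i : Fin m => fun a : Fin A => ((e (i, a) : {x // x ∈ S}) : γ)) = M :=
          congrArg Subtype.val he
        have hFi : ∀ i : Fin m, (fun a => ((e (i, a) : {x // x ∈ S}) : γ)) ∈ M :=
          ((hIm e).mp heM).1
        set π₀ : Fin m → Fin m :=
          fun i => gM.symm ⟨fun a => ((e (i, a) : {x // x ∈ S}) : γ), hFi i⟩ with hπ₀def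
        have hπ₀key : ∀ i a, e₀ (π₀ i, a) = e (i, a) := by
          intro i a
          apply Subtype.ext
          show (gM (π₀ i)).1 a = ((e (i, a) : {x // x ∈ S}) : γ)
          rw [hπ₀def]
          rw [Equiv.apply_symm_apply]
        have hπ₀inj : Function.Injective π₀ := by
          intro i i' h
          have h1 : e₀ (π₀ i, ⟨0, hA⟩) = e₀ (π₀ i', ⟨0, hA⟩) := by rw [h]
          rw [hπ₀key, hπ₀key] at h1
          have h2 := e.injective h1
          exact congrArg Prod.fst h2
        refine ⟨Equiv.ofBijective π₀ ((Finite.injective_iff_bijective).mp hπ₀inj),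
          Subtype.ext ?_⟩
        apply Equiv.ext; rintro ⟨i, a⟩
        show e₀ (π₀ i, a) = e (i, a)
        exact hπ₀key i a
  have hX : Nat.card (Fin m × Fin A ≃ {x // x ∈ S}) = Nat.factorial (A * m) := by
    rw [Nat.card_eq_fintype_card, Fintype.card_equiv (Fintype.equivOfCardEq hcardD),
      Fintype.card_prod, Fintype.card_fin, Fintype.card_fin, mul_comm m A]
  have hP : Nat.card (Equiv.Perm (Fin m)) = Nat.factorial m := by
    rw [Nat.card_eq_fintype_card, Fintype.card_perm, Fintype.card_fin]
  rw [hX, hP] at main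
  exact main.symm

end Matching

/-- The defining predicate of `thetaCount`. -/
def ThetaPred (A n : ℕ) (τ : List ℕ →₀ ℕ) (𝓘 : Finset (List ℕ × (Fin A → Finset (Fin n)))) :
    Prop :=
  (∀ p ∈ 𝓘, IsPartitionList p.1 ∧ ∀ a : Fin A, (p.2 a).card = p.1.sum) ∧
  (∀ p ∈ 𝓘, ∀ q ∈ 𝓘, ∀ a b : Fin A,
    (p ≠ q ∨ a ≠ b) → Disjoint (p.2 a) (q.2 b)) ∧
  (∀ i : Fin n, ∃ p ∈ 𝓘, ∃ a : Fin A, i ∈ p.2 a) ∧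
  (∀ l : List ℕ, τ l = (𝓘.filter fun p => p.1 = l).card)

theorem thetaCount_eq (A n : ℕ) (τ : List ℕ →₀ ℕ) :
    thetaCount A n τ = Nat.card {𝓘 : Finset (List ℕ × (Fin A → Finset (Fin n))) //
      ThetaPred A n τ 𝓘} := rfl

/-- The number of matchings of a set of `A*m` elements into `m` ordered `A`-tuples. -/
def matchCard (A N : ℕ) : ℕ :=
  Nat.card {M : Finset (Fin A → ℕ) // IsMatching A (Finset.range N) M}

theorem matchCard_mul (A m : ℕ) (hA : 0 < A) :
    matchCard A (A * m) * Nat.factorial m = Nat.factorial (A * m) :=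
  matching_count A m hA _ (Finset.card_range _)

theorem matchCard_of_card {γ : Type*} (A m : ℕ) (hA : 0 < A) (S : Finset γ)
    (hS : S.card = A * m) :
    Nat.card {M : Finset (Fin A → γ) // IsMatching A S M} = matchCard A (A * m) :=
  Nat.eq_of_mul_eq_mul_right (Nat.factorial_pos m)
    ((matching_count A m hA S hS).trans (matchCard_mul A m hA).symm)

section ThetaSplit

def splitF (A n : ℕ) (𝓘 : Finset (List ℕ × (Fin A → Finset (Fin n)))) :
    Finset (List ℕ × (Fin 1 → Finset (Fin n))) :=
  (𝓘 ×ˢ Finset.univ).image (fun pa => (pa.1.1, fun _ : Fin 1 => pa.1.2 pa.2))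

def Tset (n : ℕ) (𝓘' : Finset (List ℕ × (Fin 1 → Finset (Fin n)))) (l : List ℕ) :
    Finset (Finset (Fin n)) :=
  (𝓘'.filter fun p => p.1 = l).image (fun p => p.2 0)

def Mset (A n : ℕ) (𝓘 : Finset (List ℕ × (Fin A → Finset (Fin n)))) (l : List ℕ) :
    Finset (Fin A → Finset (Fin n)) :=
  (𝓘.filter fun p => p.1 = l).image (fun p => p.2)

def buildI (A n : ℕ) (τ : List ℕ →₀ ℕ)
    (M : ∀ _ : {l // l ∈ τ.support}, Finset (Fin A → Finset (Fin n))) :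
    Finset (List ℕ × (Fin A → Finset (Fin n))) :=
  τ.support.attach.biUnion (fun l => (M l).image (fun F => (l.1, F)))

variable {A n : ℕ} {τ : List ℕ →₀ ℕ}

theorem mem_buildI {M : ∀ _ : {l // l ∈ τ.support}, Finset (Fin A → Finset (Fin n))}
    (p : List ℕ × (Fin A → Finset (Fin n))) :
    p ∈ buildI A n τ M ↔ ∃ hl : p.1 ∈ τ.support, p.2 ∈ M ⟨p.1, hl⟩ := by
  simp only [buildI, Finset.mem_biUnion, Finset.mem_attach, true_and, Finset.mem_image]
  constructor
  · rintro ⟨l, F, hF, hFp⟩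
    subst hFp
    exact ⟨l.2, hF⟩
  · rintro ⟨hl, hM⟩
    exact ⟨⟨p.1, hl⟩, p.2, hM, rfl⟩

theorem buildI_filter {M : ∀ _ : {l // l ∈ τ.support}, Finset (Fin A → Finset (Fin n))}
    (l : {l // l ∈ τ.support}) :
    (buildI A n τ M).filter (fun p => p.1 = l.1) = (M l).image (fun F => (l.1, F)) := by
  ext p
  simp only [Finset.mem_filter, Finset.mem_image]
  constructor
  · rintro ⟨hp, hpl⟩
    obtain ⟨hl2, hMp⟩ := (mem_buildI p).mp hp
    refine ⟨p.2, ?_, Prod.ext hpl.symm rfl⟩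
    have hsub : (⟨p.1, hl2⟩ : {l // l ∈ τ.support}) = l := Subtype.ext hpl
    rw [← hsub]
    exact hMp
  · rintro ⟨F, hF, rfl⟩
    exact ⟨(mem_buildI _).mpr ⟨l.2, hF⟩, rfl⟩

theorem splitF_injOn {𝓘 : Finset (List ℕ × (Fin A → Finset (Fin n)))}
    (h𝓘 : ThetaPred A n τ 𝓘) :
    Set.InjOn (fun pa : (List ℕ × (Fin A → Finset (Fin n))) × Fin A =>
      (pa.1.1, fun _ : Fin 1 => pa.1.2 pa.2))
      ↑(𝓘 ×ˢ (Finset.univ : Finset (Fin A))) := by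
  rintro ⟨p, a⟩ hpa ⟨q, b⟩ hqb heq
  simp only [Finset.mem_coe, Finset.mem_product] at hpa hqb
  by_contra hne
  have hor : p ≠ q ∨ a ≠ b := by
    by_contra hno
    push_neg at hno
    exact hne (by rw [hno.1, hno.2])
  have hdis := h𝓘.2.1 p hpa.1 q hqb.1 a b hor
  have h1 : p.2 a = q.2 b := congrFun (congrArg Prod.snd heq) 0
  rw [h1] at hdis
  have h2 : q.2 b = ∅ := disjoint_self.mp hdis
  have h3 := (h𝓘.1 q hqb.1).2 b
  have h4 := sum_pos_of_isPartitionList (h𝓘.1 q hqb.1).1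
  rw [h2, Finset.card_empty] at h3
  omega

theorem splitF_theta (hA : 0 < A) {𝓘 : Finset (List ℕ × (Fin A → Finset (Fin n)))}
    (h𝓘 : ThetaPred A n τ 𝓘) : ThetaPred 1 n (A • τ) (splitF A n 𝓘) := by
  refine ⟨?_, ?_, ?_, ?_⟩
  · rintro p' hp'
    obtain ⟨⟨p, a⟩, hpa, rfl⟩ := Finset.mem_image.mp hp'
    have hp := (Finset.mem_product.mp hpa).1
    exact ⟨(h𝓘.1 p hp).1, fun _ => (h𝓘.1 p hp).2 a⟩
  · rintro p' hp' q' hq' a' b' hor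
    obtain ⟨⟨p, a⟩, hpa, rfl⟩ := Finset.mem_image.mp hp'
    obtain ⟨⟨q, b⟩, hqb, rfl⟩ := Finset.mem_image.mp hq'
    rcases hor with hne | hne
    · have hne2 : (p, a) ≠ (q, b) := fun h => hne (by rw [h])
      have hor2 : p ≠ q ∨ a ≠ b := by
        by_contra hno
        push_neg at hno
        exact hne2 (Prod.ext hno.1 hno.2)
      exact h𝓘.2.1 p (Finset.mem_product.mp hpa).1 q (Finset.mem_product.mp hqb).1 a b hor2
    · exact absurd (Subsingleton.elim a' b') hne
  · intro i
    obtain ⟨p, hp, a, hi⟩ := h𝓘.2.2.1 i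
    exact ⟨(p.1, fun _ : Fin 1 => p.2 a),
      Finset.mem_image.mpr ⟨(p, a), Finset.mem_product.mpr ⟨hp, Finset.mem_univ a⟩, rfl⟩, 0, hi⟩
  · intro l
    have hfil : (splitF A n 𝓘).filter (fun p => p.1 = l)
        = ((𝓘.filter fun p => p.1 = l) ×ˢ Finset.univ).image
          (fun pa => (pa.1.1, fun _ : Fin 1 => pa.1.2 pa.2)) := by
      rw [splitF, Finset.filter_image]
      congr 1
      ext ⟨p, a⟩
      simp only [Finset.mem_filter, Finset.mem_product, Finset.mem_univ, and_true]
      try tauto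
    have hsub : ((𝓘.filter fun p => p.1 = l) ×ˢ (Finset.univ : Finset (Fin A)))
        ⊆ (𝓘 ×ˢ (Finset.univ : Finset (Fin A))) :=
      Finset.product_subset_product (Finset.filter_subset _ _) (Finset.Subset.refl _)
    rw [hfil, Finset.card_image_of_injOn
      ((splitF_injOn h𝓘).mono (Finset.coe_subset.mpr hsub)),
      Finset.card_product, Finset.card_univ, Fintype.card_fin]
    rw [Finsupp.smul_apply, smul_eq_mul, ← h𝓘.2.2.2 l, mul_comm]

theorem q_mem_support (hA : 0 < A) {𝓘' : Finset (List ℕ × (Fin 1 → Finset (Fin n)))}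
    (hq : ThetaPred 1 n (A • τ) 𝓘') : ∀ p ∈ 𝓘', p.1 ∈ τ.support := by
  intro p hp
  rw [Finsupp.mem_support_iff]
  intro h0
  have h1 := hq.2.2.2 p.1
  rw [Finsupp.smul_apply, smul_eq_mul, h0, mul_zero] at h1
  have h2 : p ∈ 𝓘'.filter (fun q => q.1 = p.1) := Finset.mem_filter.mpr ⟨hp, rfl⟩
  have h3 := Finset.card_pos.mpr ⟨p, h2⟩
  omega

theorem Tset_injOn {𝓘' : Finset (List ℕ × (Fin 1 → Finset (Fin n)))}
    (hq : ThetaPred 1 n (A • τ) 𝓘') (l : List ℕ) :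
    Set.InjOn (fun p : List ℕ × (Fin 1 → Finset (Fin n)) => p.2 0)
      (𝓘'.filter fun p => p.1 = l) := by
  intro p hp q hqm heq
  simp only [Finset.coe_filter, Set.mem_setOf_eq] at hp hqm
  by_contra hne
  have hdis := hq.2.1 p hp.1 q hqm.1 0 0 (Or.inl hne)
  have heq' : p.2 0 = q.2 0 := heq
  rw [heq'] at hdis
  have h2 : q.2 0 = ∅ := disjoint_self.mp hdis
  have h3 := (hq.1 q hqm.1).2 0
  have h4 := sum_pos_of_isPartitionList (hq.1 q hqm.1).1
  rw [h2, Finset.card_empty] at h3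
  omega

theorem Tset_card {𝓘' : Finset (List ℕ × (Fin 1 → Finset (Fin n)))}
    (hq : ThetaPred 1 n (A • τ) 𝓘') (l : List ℕ) :
    (Tset n 𝓘' l).card = A * τ l := by
  rw [Tset, Finset.card_image_of_injOn (Tset_injOn hq l), ← hq.2.2.2 l,
    Finsupp.smul_apply, smul_eq_mul]

theorem matching_Tset_mem {𝓘' : Finset (List ℕ × (Fin 1 → Finset (Fin n)))} {l : List ℕ}
    {M : Finset (Fin A → Finset (Fin n))} (hM : IsMatching A (Tset n 𝓘' l) M)
    {F : Fin A → Finset (Fin n)} (hF : F ∈ M) (a : Fin A) :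
    ∃ p' ∈ 𝓘', p'.1 = l ∧ p'.2 0 = F a := by
  have h1 := hM.1 F hF a
  obtain ⟨p', hp', h2⟩ := Finset.mem_image.mp h1
  have h3 := Finset.mem_filter.mp hp'
  exact ⟨p', h3.1, h3.2, h2⟩

end ThetaSplit

section ThetaSplit2

variable {A n : ℕ} {τ : List ℕ →₀ ℕ}

theorem Mset_matching {𝓘 : Finset (List ℕ × (Fin A → Finset (Fin n)))}
    (h𝓘 : ThetaPred A n τ 𝓘) (l : List ℕ) :
    IsMatching A (Tset n (splitF A n 𝓘) l) (Mset A n 𝓘 l) := by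
  refine ⟨?_, ?_, ?_⟩
  · intro F hF a
    obtain ⟨p, hp, rfl⟩ := Finset.mem_image.mp hF
    have h3 := Finset.mem_filter.mp hp
    refine Finset.mem_image.mpr ⟨(p.1, fun _ : Fin 1 => p.2 a),
      Finset.mem_filter.mpr ⟨?_, h3.2⟩, rfl⟩
    exact Finset.mem_image.mpr ⟨(p, a), Finset.mem_product.mpr ⟨h3.1, Finset.mem_univ _⟩, rfl⟩
  · intro F hF G hG a b hab
    obtain ⟨p, hp, rfl⟩ := Finset.mem_image.mp hF
    obtain ⟨q, hq2, rfl⟩ := Finset.mem_image.mp hG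
    have h3 := Finset.mem_filter.mp hp
    have h4 := Finset.mem_filter.mp hq2
    by_cases hpq : p = q ∧ a = b
    · exact ⟨by rw [hpq.1], hpq.2⟩
    · have hor : p ≠ q ∨ a ≠ b := by tauto
      have hdis := h𝓘.2.1 p h3.1 q h4.1 a b hor
      rw [hab] at hdis
      have hemp : q.2 b = ∅ := disjoint_self.mp hdis
      have hcard := (h𝓘.1 q h4.1).2 b
      have hpos := sum_pos_of_isPartitionList (h𝓘.1 q h4.1).1
      rw [hemp, Finset.card_empty] at hcard
      omega
  · intro x hx
    obtain ⟨p', hp', h2⟩ := Finset.mem_image.mp hx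
    have h3 := Finset.mem_filter.mp hp'
    obtain ⟨⟨p, a⟩, hpa, h4⟩ := Finset.mem_image.mp h3.1
    have hp := (Finset.mem_product.mp hpa).1
    refine ⟨p.2, Finset.mem_image.mpr ⟨p, Finset.mem_filter.mpr ⟨hp, ?_⟩, rfl⟩, a, ?_⟩
    · exact (congrArg Prod.fst h4).trans h3.2
    · exact (congrFun (congrArg Prod.snd h4) 0).trans h2

theorem buildI_theta (hA : 0 < A) (hpart : ∀ l ∈ τ.support, IsPartitionList l)
    {𝓘' : Finset (List ℕ × (Fin 1 → Finset (Fin n)))} (hq : ThetaPred 1 n (A • τ) 𝓘')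
    {M : ∀ _ : {l // l ∈ τ.support}, Finset (Fin A → Finset (Fin n))}
    (hM : ∀ l, IsMatching A (Tset n 𝓘' l.1) (M l)) :
    ThetaPred A n τ (buildI A n τ M) := by
  refine ⟨?_, ?_, ?_, ?_⟩
  · intro p hp
    obtain ⟨hl, hMp⟩ := (mem_buildI p).mp hp
    refine ⟨hpart p.1 hl, fun a => ?_⟩
    obtain ⟨p', hp', hpl, hpa⟩ := matching_Tset_mem (hM ⟨p.1, hl⟩) hMp a
    rw [← hpa, (hq.1 p' hp').2 0, hpl]
  · intro p hp q hpq a b hor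
    obtain ⟨hlp, hMp⟩ := (mem_buildI p).mp hp
    obtain ⟨hlq, hMq⟩ := (mem_buildI q).mp hpq
    obtain ⟨x', hx', hxl, hxa⟩ := matching_Tset_mem (hM ⟨p.1, hlp⟩) hMp a
    obtain ⟨y', hy', hyl, hyb⟩ := matching_Tset_mem (hM ⟨q.1, hlq⟩) hMq b
    by_cases hxy : x' = y'
    · have hxl' : x'.1 = p.1 := hxl
      have hyl' : y'.1 = q.1 := hyl
      have hl : p.1 = q.1 := by rw [← hxl', hxy, hyl']
      have hsub : (⟨p.1, hlp⟩ : {l // l ∈ τ.support}) = ⟨q.1, hlq⟩ := Subtype.ext hl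
      have hMq2 : q.2 ∈ M ⟨p.1, hlp⟩ := by rw [hsub]; exact hMq
      have hab : p.2 a = q.2 b := by rw [← hxa, hxy, hyb]
      obtain ⟨hFG, hab2⟩ := (hM ⟨p.1, hlp⟩).2.1 p.2 hMp q.2 hMq2 a b hab
      have hpq2 : p = q := Prod.ext hl hFG
      rcases hor with h | h
      · exact absurd hpq2 h
      · exact absurd hab2 h
    · have hdis := hq.2.1 x' hx' y' hy' 0 0 (Or.inl hxy)
      rw [hxa, hyb] at hdis
      exact hdis
  · intro i
    obtain ⟨p', hp', a1, hi⟩ := hq.2.2.1 i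
    have hi0 : i ∈ p'.2 0 := by
      rw [show (0 : Fin 1) = a1 from Subsingleton.elim _ _]
      exact hi
    have hl := q_mem_support hA hq p' hp'
    have hT : p'.2 0 ∈ Tset n 𝓘' p'.1 :=
      Finset.mem_image.mpr ⟨p', Finset.mem_filter.mpr ⟨hp', rfl⟩, rfl⟩
    obtain ⟨F, hF, a, hFa⟩ := (hM ⟨p'.1, hl⟩).2.2 _ hT
    refine ⟨(p'.1, F), (mem_buildI _).mpr ⟨hl, hF⟩, a, ?_⟩
    show i ∈ F a
    rw [hFa]
    exact hi0
  · intro l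
    by_cases hl : l ∈ τ.support
    · have hfil := buildI_filter (M := M) ⟨l, hl⟩
      rw [hfil, Finset.card_image_of_injective _
        (fun F G h => by exact congrArg Prod.snd h)]
      have hc := (hM ⟨l, hl⟩).card_eq
      rw [Tset_card hq l, mul_comm ((M ⟨l, hl⟩).card) A] at hc
      exact Nat.eq_of_mul_eq_mul_left hA hc
    · rw [Finsupp.notMem_support_iff.mp hl]
      have hemp : (buildI A n τ M).filter (fun p => p.1 = l) = ∅ := by
        rw [Finset.eq_empty_iff_forall_notMem]
        intro p hp
        obtain ⟨hp1, hpl⟩ := Finset.mem_filter.mp hp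
        obtain ⟨hl2, -⟩ := (mem_buildI p).mp hp1
        exact hl (hpl ▸ hl2)
      rw [hemp, Finset.card_empty]

theorem buildI_of_theta {𝓘 : Finset (List ℕ × (Fin A → Finset (Fin n)))}
    (h𝓘 : ThetaPred A n τ 𝓘) :
    buildI A n τ (fun l => Mset A n 𝓘 l.1) = 𝓘 := by
  ext p
  rw [mem_buildI]
  constructor
  · rintro ⟨hl, hMp⟩
    obtain ⟨q, hq, hq2⟩ := Finset.mem_image.mp hMp
    have h3 := Finset.mem_filter.mp hq
    have h5 : q = p := Prod.ext h3.2 hq2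
    rw [← h5]
    exact h3.1
  · intro hp
    have hl : p.1 ∈ τ.support := by
      rw [Finsupp.mem_support_iff, h𝓘.2.2.2 p.1]
      have h6 : p ∈ 𝓘.filter (fun q => q.1 = p.1) := Finset.mem_filter.mpr ⟨hp, rfl⟩
      have h7 := Finset.card_pos.mpr ⟨p, h6⟩
      omega
    exact ⟨hl, Finset.mem_image.mpr ⟨p, Finset.mem_filter.mpr ⟨hp, rfl⟩, rfl⟩⟩

theorem splitF_buildI (hA : 0 < A)
    {𝓘' : Finset (List ℕ × (Fin 1 → Finset (Fin n)))} (hq : ThetaPred 1 n (A • τ) 𝓘')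
    {M : ∀ _ : {l // l ∈ τ.support}, Finset (Fin A → Finset (Fin n))}
    (hM : ∀ l, IsMatching A (Tset n 𝓘' l.1) (M l)) :
    splitF A n (buildI A n τ M) = 𝓘' := by
  ext p'
  rw [splitF, Finset.mem_image]
  constructor
  · rintro ⟨⟨p, a⟩, hpa, rfl⟩
    have hp := (Finset.mem_product.mp hpa).1
    obtain ⟨hl, hMp⟩ := (mem_buildI p).mp hp
    obtain ⟨x', hx', hxl, hxa⟩ := matching_Tset_mem (hM ⟨p.1, hl⟩) hMp a
    have h5 : ((p, a).1.1, fun _ : Fin 1 => (p, a).1.2 (p, a).2) = x' := by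
      refine Prod.ext hxl.symm (funext fun b => ?_)
      show p.2 a = x'.2 b
      rw [← hxa]
      exact congrArg x'.2 (Subsingleton.elim 0 b)
    rw [h5]
    exact hx'
  · intro hp'
    have hl := q_mem_support hA hq p' hp'
    have hT : p'.2 0 ∈ Tset n 𝓘' p'.1 :=
      Finset.mem_image.mpr ⟨p', Finset.mem_filter.mpr ⟨hp', rfl⟩, rfl⟩
    obtain ⟨F, hF, a, hFa⟩ := (hM ⟨p'.1, hl⟩).2.2 _ hT
    refine ⟨((p'.1, F), a), Finset.mem_product.mpr
      ⟨(mem_buildI _).mpr ⟨hl, hF⟩, Finset.mem_univ _⟩, ?_⟩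
    refine Prod.ext rfl (funext fun b => ?_)
    show F a = p'.2 b
    rw [hFa]
    exact congrArg p'.2 (Subsingleton.elim 0 b)

theorem Mset_buildI
    {M : ∀ _ : {l // l ∈ τ.support}, Finset (Fin A → Finset (Fin n))}
    (l : {l // l ∈ τ.support}) :
    Mset A n (buildI A n τ M) l.1 = M l := by
  rw [Mset, buildI_filter (M := M) l, Finset.image_image]
  exact Finset.image_id'

end ThetaSplit2

theorem theta_split (A n : ℕ) (hA : 0 < A) (τ : List ℕ →₀ ℕ)
    (hpart : ∀ l ∈ τ.support, IsPartitionList l) :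
    thetaCount A n τ = thetaCount 1 n (A • τ) * ∏ l ∈ τ.support, matchCard A (A * τ l) := by
  have h1 : thetaCount A n τ = Nat.card
      {qm : Finset (List ℕ × (Fin 1 → Finset (Fin n))) ×
            ({l // l ∈ τ.support} → Finset (Fin A → Finset (Fin n))) //
        ThetaPred 1 n (A • τ) qm.1 ∧
          ∀ l : {l // l ∈ τ.support}, IsMatching A (Tset n qm.1 l.1) (qm.2 l)} := by
    rw [thetaCount_eq]
    refine Nat.card_eq_of_bijective
      (fun I => ⟨(splitF A n I.1, fun l => Mset A n I.1 l.1),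
        splitF_theta hA I.2, fun l => Mset_matching I.2 l.1⟩) ?_
    refine Function.bijective_iff_has_inverse.mpr
      ⟨fun r => ⟨buildI A n τ r.1.2, buildI_theta hA hpart r.2.1 r.2.2⟩, ?_, ?_⟩
    · intro I
      exact Subtype.ext (buildI_of_theta I.2)
    · rintro ⟨⟨𝓘', M⟩, hq, hM⟩
      refine Subtype.ext (Prod.ext ?_ ?_)
      · exact splitF_buildI hA hq hM
      · funext l
        exact Mset_buildI l
  have h2 : Nat.card
      {qm : Finset (List ℕ × (Fin 1 → Finset (Fin n))) ×
            ({l // l ∈ τ.support} → Finset (Fin A → Finset (Fin n))) //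
        ThetaPred 1 n (A • τ) qm.1 ∧
          ∀ l : {l // l ∈ τ.support}, IsMatching A (Tset n qm.1 l.1) (qm.2 l)}
      = thetaCount 1 n (A • τ) *
        Nat.card (∀ l : {l // l ∈ τ.support}, Fin (matchCard A (A * τ l.1))) := by
    rw [thetaCount_eq]
    refine nat_card_eq_mul_of_fibers
      (fun r => (⟨r.1.1, r.2.1⟩ :
        {𝓘' : Finset (List ℕ × (Fin 1 → Finset (Fin n))) //
          ThetaPred 1 n (A • τ) 𝓘'})) ?_
    rintro ⟨𝓘', hq⟩
    have e2 : ∀ l : {l // l ∈ τ.support},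
        Nonempty ({M : Finset (Fin A → Finset (Fin n)) // IsMatching A (Tset n 𝓘' l.1) M}
          ≃ Fin (matchCard A (A * τ l.1))) := by
      intro l
      refine ⟨Fintype.equivFinOfCardEq ?_⟩
      rw [← Nat.card_eq_fintype_card]
      exact matchCard_of_card A (τ l.1) hA _ (Tset_card hq l.1)
    refine ⟨Equiv.trans ?_ (Equiv.piCongrRight fun l => (e2 l).some)⟩
    refine Equiv.mk
      (fun r => fun l => ⟨r.1.1.2 l, ?_⟩)
      (fun M => ⟨⟨(𝓘', fun l => (M l).1), hq, fun l => (M l).2⟩, rfl⟩)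
      ?_ ?_
    · have h : r.1.1.1 = 𝓘' := congrArg Subtype.val r.2
      have h2 := r.1.2.2 l
      rw [h] at h2
      exact h2
    · intro r
      apply Subtype.ext
      apply Subtype.ext
      exact Prod.ext (congrArg Subtype.val r.2).symm rfl
    · intro M
      exact funext fun l => Subtype.ext rfl
  have h3 : Nat.card (∀ l : {l // l ∈ τ.support}, Fin (matchCard A (A * τ l.1)))
      = ∏ l ∈ τ.support, matchCard A (A * τ l) := by
    rw [Nat.card_pi, ← Finset.prod_coe_sort τ.support (fun l => matchCard A (A * τ l))]
    refine Finset.prod_congr rfl fun l _ => ?_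
    rw [Nat.card_eq_fintype_card, Fintype.card_fin]
  rw [h1, h2, h3]

/-- Combinatorics of types under `τ ↦ A·τ`: (i) `d_{A·τ} = d_τ^A`;
(ii) `#(A·τ) = A·#τ`; (iii) `ϑ(τ,n)·ν(τ,j) = A^{#τ/j}·ϑ(A·τ,n)·ν(A·τ,A·j)`. -/
theorem type_rescaling_identities (A n j : ℕ) (hA : 0 < A) (hj : 0 < j)
    (τ : List ℕ →₀ ℕ)
    (hpart : ∀ l ∈ τ.support, IsPartitionList l)
    (hsize : A * typeSize τ = n)
    (hjdvd : j ∣ n / A) :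
    dConst (A • τ) = dConst τ ^ A ∧
    typeCount (A • τ) = A * typeCount τ ∧
    thetaCount A n τ * nuCount τ j =
      A ^ (typeCount τ / j) * thetaCount 1 n (A • τ) * nuCount (A • τ) (A * j) := by
  have hAne : A ≠ 0 := hA.ne'
  have hd : ∀ σ : List ℕ →₀ ℕ, dConst σ = ∏ l ∈ σ.support, partDim l ^ σ l := fun _ => rfl
  have ht : ∀ σ : List ℕ →₀ ℕ, typeCount σ = ∑ l ∈ σ.support, σ l := fun _ => rfl
  refine ⟨?_, ?_, ?_⟩
  · rw [hd, hd, Finsupp.support_smul_eq hAne, ← Finset.prod_pow]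
    refine Finset.prod_congr rfl fun l _ => ?_
    rw [Finsupp.smul_apply, smul_eq_mul, mul_comm, pow_mul]
  · rw [ht, ht, Finsupp.support_smul_eq hAne, Finset.mul_sum]
    refine Finset.sum_congr rfl fun l _ => ?_
    rw [Finsupp.smul_apply, smul_eq_mul]
  · have hnu2 : nuCount (A • τ) (A * j) = ∏ l ∈ τ.support, allJCard (A * τ l) (A * j) := by
      rw [nuCount_eq_prod, Finsupp.support_smul_eq hAne]
      exact Finset.prod_congr rfl fun l _ => by rw [Finsupp.smul_apply, smul_eq_mul]
    rcases em (∀ l ∈ τ.support, j ∣ τ l) with hall | hnall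
    · -- divisible case
      have htc : typeCount τ = j * ∑ l ∈ τ.support, (τ l / j) := by
        rw [ht τ, Finset.mul_sum]
        exact Finset.sum_congr rfl fun l hl => (Nat.mul_div_cancel' (hall l hl)).symm
      have hsum : typeCount τ / j = ∑ l ∈ τ.support, (τ l / j) := by
        rw [htc, Nat.mul_div_cancel_left _ hj]
      have hApow : A ^ (typeCount τ / j) = ∏ l ∈ τ.support, A ^ (τ l / j) := by
        rw [hsum, Finset.prod_pow_eq_pow_sum]
      set D : ℕ := ∏ l ∈ τ.support, ((τ l / j).factorial * j ^ (τ l / j)) with hD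
      have hDpos : 0 < D :=
        Finset.prod_pos fun l _ => Nat.mul_pos (Nat.factorial_pos _) (Nat.pow_pos hj)
      refine Nat.eq_of_mul_eq_mul_right hDpos ?_
      have key : ∀ l ∈ τ.support,
          matchCard A (A * τ l) * allJCard (τ l) j *
            ((τ l / j).factorial * j ^ (τ l / j))
          = A ^ (τ l / j) * allJCard (A * τ l) (A * j) *
            ((τ l / j).factorial * j ^ (τ l / j)) := by
        intro l hl
        have hdl := hall l hl
        have e1 := allJCard_mul (τ l) j hj hdl
        have e2 := allJCard_mul (A * τ l) (A * j) (Nat.mul_pos hA hj) (mul_dvd_mul_left A hdl)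
        have e3 : (A * τ l) / (A * j) = τ l / j := Nat.mul_div_mul_left _ _ hA
        rw [e3] at e2
        calc matchCard A (A * τ l) * allJCard (τ l) j *
              ((τ l / j).factorial * j ^ (τ l / j))
            = matchCard A (A * τ l) * (τ l).factorial := by rw [mul_assoc, e1]
          _ = (A * τ l).factorial := matchCard_mul A (τ l) hA
          _ = A ^ (τ l / j) * allJCard (A * τ l) (A * j) *
              ((τ l / j).factorial * j ^ (τ l / j)) := by
              rw [← e2, mul_pow]
              ring
      calc thetaCount A n τ * nuCount τ j * D
          = (thetaCount 1 n (A • τ) * ∏ l ∈ τ.support, matchCard A (A * τ l)) *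
            (∏ l ∈ τ.support, allJCard (τ l) j) * D := by
            rw [theta_split A n hA τ hpart, nuCount_eq_prod]
        _ = thetaCount 1 n (A • τ) * ∏ l ∈ τ.support,
              (matchCard A (A * τ l) * allJCard (τ l) j *
                ((τ l / j).factorial * j ^ (τ l / j))) := by
            rw [Finset.prod_mul_distrib, Finset.prod_mul_distrib, hD]
            ring
        _ = thetaCount 1 n (A • τ) * ∏ l ∈ τ.support,
              (A ^ (τ l / j) * allJCard (A * τ l) (A * j) *
                ((τ l / j).factorial * j ^ (τ l / j))) := by
            rw [Finset.prod_congr rfl key]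
        _ = A ^ (typeCount τ / j) * thetaCount 1 n (A • τ) * nuCount (A • τ) (A * j) * D := by
            rw [hnu2, hApow, Finset.prod_mul_distrib, Finset.prod_mul_distrib, hD]
            ring
    · -- non-divisible case: both sides vanish
      simp only [not_forall] at hnall
      obtain ⟨l₀, hl₀, hnd⟩ := hnall
      have hz1 : nuCount τ j = 0 := by
        rw [nuCount_eq_prod]
        exact Finset.prod_eq_zero hl₀ (allJCard_eq_zero hj hnd)
      have hz2 : nuCount (A • τ) (A * j) = 0 := by
        rw [hnu2]
        refine Finset.prod_eq_zero hl₀ (allJCard_eq_zero (Nat.mul_pos hA hj) ?_)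
        intro hdvd2
        exact hnd ((mul_dvd_mul_iff_left hAne).mp hdvd2)
      rw [hz1, hz2, mul_zero, mul_zero]
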